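/- Let t_1,...,t_n be transpositions in S_d generating a subgroup whose orbits on {1,...,d} are Σ_1,...,Σ_m. Let a, b be two distinct points lying in the same orbit Σ_i. Then the sequence (t_1,...,t_n) is braid-equivalent to a sequence (t'_1,...,t'_n) with t'_1 = (ab), i.e. it can be transformed into such a sequence by a finite number of elementary moves. -/
import Mathlib


/-- One elementary braid move `σ_j`: replace an adjacent pair `(a, b)` by `(a b a⁻¹, a)`. -/
inductive BraidStep {G : Type*} [Group G] : List G → List G → Prop
  | step (l₁ l₂ : List G) (a b : G) :
      BraidStep (l₁ ++ a :: b :: l₂) (l₁ ++ (a * b * a⁻¹) :: a :: l₂)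

/-- Braid equivalence of sequences: the equivalence relation generated by the
elementary moves `σ_j` (and hence also by their inverses). -/
def BraidEquiv {G : Type*} [Group G] : List G → List G → Prop :=
  Relation.EqvGen BraidStep

section AuxBraid

variable {G : Type*} [Group G]

lemma braidEquiv_refl (L : List G) : BraidEquiv L L := Relation.EqvGen.refl L

lemma braidEquiv_symm {L L' : List G} (h : BraidEquiv L L') : BraidEquiv L' L :=
  Relation.EqvGen.symm _ _ h

lemma braidEquiv_trans {L₁ L₂ L₃ : List G} (h1 : BraidEquiv L₁ L₂) (h2 : BraidEquiv L₂ L₃) :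
    BraidEquiv L₁ L₃ :=
  Relation.EqvGen.trans _ _ _ h1 h2

lemma braidEquiv_of_step {L L' : List G} (h : BraidStep L L') : BraidEquiv L L' :=
  Relation.EqvGen.rel _ _ h

lemma braidStep_cons {M M' : List G} (t : G) (h : BraidStep M M') : BraidStep (t :: M) (t :: M') := by
  cases h with
  | step l₁ l₂ a b => exact BraidStep.step (t :: l₁) l₂ a b

lemma braidEquiv_cons {M M' : List G} (t : G) (h : BraidEquiv M M') :
    BraidEquiv (t :: M) (t :: M') := by
  induction h with
  | rel x y hxy => exact braidEquiv_of_step (braidStep_cons t hxy)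
  | refl x => exact braidEquiv_refl _
  | symm x y _ ih => exact braidEquiv_symm ih
  | trans x y z _ _ ih1 ih2 => exact braidEquiv_trans ih1 ih2

/-- Any element of a list can be pulled to the front (unchanged), conjugating the
elements it passes over. -/
lemma braidEquiv_pull (l₁ : List G) (t : G) (l₂ : List G) :
    BraidEquiv (l₁ ++ t :: l₂) (t :: (l₁.map fun x => t⁻¹ * x * t) ++ l₂) := by
  induction l₁ using List.reverseRecOn generalizing l₂ with
  | nil => simpa using braidEquiv_refl (t :: l₂)
  | append_singleton l x ih =>
      have h1 : BraidStep (l ++ t :: (t⁻¹ * x * t) :: l₂) (l ++ x :: t :: l₂) := by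
        have hstep := BraidStep.step l l₂ t (t⁻¹ * x * t)
        have he : t * (t⁻¹ * x * t) * t⁻¹ = x := by group
        rwa [he] at hstep
      have e1 : (l ++ [x]) ++ t :: l₂ = l ++ x :: t :: l₂ := by simp
      have e2 : t :: ((l ++ [x]).map fun y => t⁻¹ * y * t) ++ l₂
          = t :: (l.map fun y => t⁻¹ * y * t) ++ (t⁻¹ * x * t) :: l₂ := by simp
      rw [e1, e2]
      exact braidEquiv_trans (braidEquiv_symm (braidEquiv_of_step h1)) (ih ((t⁻¹ * x * t) :: l₂))

/-- A single braid move preserves the generated subgroup. -/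
lemma braidStep_closure {L L' : List G} (h : BraidStep L L') :
    Subgroup.closure {x | x ∈ L} = Subgroup.closure {x | x ∈ L'} := by
  cases h with
  | step l₁ l₂ a b =>
    apply le_antisymm <;> rw [Subgroup.closure_le] <;> intro x hx <;>
      simp only [Set.mem_setOf_eq, List.mem_append, List.mem_cons] at hx
    · have ha : a ∈ Subgroup.closure {x | x ∈ l₁ ++ (a * b * a⁻¹) :: a :: l₂} :=
        Subgroup.subset_closure (by simp)
      have hab : a * b * a⁻¹ ∈ Subgroup.closure {x | x ∈ l₁ ++ (a * b * a⁻¹) :: a :: l₂} :=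
        Subgroup.subset_closure (by simp)
      rcases hx with h1 | h2 | h3 | h4
      · exact Subgroup.subset_closure (by simp [h1])
      · exact h2 ▸ ha
      · have hb : x = a⁻¹ * (a * b * a⁻¹) * a := by rw [h3]; group
        rw [hb]
        exact mul_mem (mul_mem (inv_mem ha) hab) ha
      · exact Subgroup.subset_closure (by simp [h4])
    · have ha : a ∈ Subgroup.closure {x | x ∈ l₁ ++ a :: b :: l₂} :=
        Subgroup.subset_closure (by simp)
      have hb : b ∈ Subgroup.closure {x | x ∈ l₁ ++ a :: b :: l₂} :=
        Subgroup.subset_closure (by simp)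
      rcases hx with h1 | h2 | h3 | h4
      · exact Subgroup.subset_closure (by simp [h1])
      · rw [h2]
        exact mul_mem (mul_mem ha hb) (inv_mem ha)
      · exact h3 ▸ ha
      · exact Subgroup.subset_closure (by simp [h4])

/-- Braid equivalence preserves the generated subgroup. -/
lemma braidEquiv_closure {L L' : List G} (h : BraidEquiv L L') :
    Subgroup.closure {x | x ∈ L} = Subgroup.closure {x | x ∈ L'} := by
  induction h with
  | rel x y hxy => exact braidStep_closure hxy
  | refl x => rfl
  | symm x y _ ih => exact ih.symm
  | trans x y z _ _ ih1 ih2 => exact ih1.trans ih2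

end AuxBraid

section AuxPerm

variable {α : Type*} [DecidableEq α]

lemma isSwap_eq_swap {t : Equiv.Perm α} (h : t.IsSwap) {a : α} (ha : t a ≠ a) :
    t = Equiv.swap a (t a) := by
  obtain ⟨x, y, hxy, rfl⟩ := h
  by_cases h1 : a = x
  · subst h1; rw [Equiv.swap_apply_left]
  · by_cases h2 : a = y
    · subst h2; rw [Equiv.swap_apply_right, Equiv.swap_comm]
    · exact absurd (Equiv.swap_apply_of_ne_of_ne h1 h2) ha

lemma isSwap_conj {x : Equiv.Perm α} (h : x.IsSwap) (σ : Equiv.Perm α) :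
    (σ * x * σ⁻¹).IsSwap := by
  obtain ⟨u, v, huv, rfl⟩ := h
  exact ⟨σ u, σ v, fun he => huv (σ.injective he), (Equiv.swap_apply_apply σ u v).symm⟩

/-- Adjoining the generator `swap a c` merges the orbits of `a` and `c`:  if `σ a = b` for
`σ` in the enlarged group, then `b` lies in the old orbit of `a` or of `c`. -/
lemma orbit_insert_swap (S : Set (Equiv.Perm α)) (a c b : α) (σ : Equiv.Perm α)
    (hσ : σ ∈ Subgroup.closure (insert (Equiv.swap a c) S)) (hb : σ a = b) :
    (∃ τ ∈ Subgroup.closure S, τ a = b) ∨ (∃ τ ∈ Subgroup.closure S, τ c = b) := by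
  set O : Set α :=
    {x | (∃ τ ∈ Subgroup.closure S, τ a = x) ∨ ∃ τ ∈ Subgroup.closure S, τ c = x} with hO
  have haO : a ∈ O := Or.inl ⟨1, one_mem _, rfl⟩
  have hcO : c ∈ O := Or.inr ⟨1, one_mem _, rfl⟩
  let H : Subgroup (Equiv.Perm α) :=
    { carrier := {g | ∀ x, x ∈ O ↔ g x ∈ O}
      one_mem' := by intro x; simp
      mul_mem' := by
        intro g h hg hh x
        have := (hh x).trans (hg (h x))
        simpa [Equiv.Perm.mul_apply] using this
      inv_mem' := by
        intro g hg x
        have := (hg (g⁻¹ x)).symm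
        simpa using this }
  have hle : Subgroup.closure (insert (Equiv.swap a c) S) ≤ H := by
    rw [Subgroup.closure_le]
    rintro t (rfl | ht)
    · intro x
      have fwd : ∀ y, y ∈ O → Equiv.swap a c y ∈ O := by
        intro y hy
        by_cases h1 : y = a
        · subst h1; rw [Equiv.swap_apply_left]; exact hcO
        · by_cases h2 : y = c
          · subst h2; rw [Equiv.swap_apply_right]; exact haO
          · rwa [Equiv.swap_apply_of_ne_of_ne h1 h2]
      constructor
      · exact fwd x
      · intro hx
        have := fwd _ hx
        rwa [Equiv.swap_apply_self] at this
    · intro x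
      constructor
      · rintro (⟨τ, hτ, rfl⟩ | ⟨τ, hτ, rfl⟩)
        · exact Or.inl ⟨t * τ, mul_mem (Subgroup.subset_closure ht) hτ,
            by simp [Equiv.Perm.mul_apply]⟩
        · exact Or.inr ⟨t * τ, mul_mem (Subgroup.subset_closure ht) hτ,
            by simp [Equiv.Perm.mul_apply]⟩
      · rintro (⟨τ, hτ, hτx⟩ | ⟨τ, hτ, hτx⟩)
        · refine Or.inl ⟨t⁻¹ * τ, mul_mem (inv_mem (Subgroup.subset_closure ht)) hτ, ?_⟩
          simp [Equiv.Perm.mul_apply, hτx]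
        · refine Or.inr ⟨t⁻¹ * τ, mul_mem (inv_mem (Subgroup.subset_closure ht)) hτ, ?_⟩
          simp [Equiv.Perm.mul_apply, hτx]
  have hσH : ∀ x, x ∈ O ↔ σ x ∈ O := hle hσ
  have hbO : b ∈ O := hb ▸ (hσH a).mp haO
  exact hbO

end AuxPerm

/-- Main induction: a list of transpositions with `a ≠ b` in the same orbit of the
generated group is braid-equivalent to one starting with `swap a b`. -/
lemma braid_main {d : ℕ} : ∀ (n : ℕ) (L : List (Equiv.Perm (Fin d))), L.length ≤ n →
    (∀ t ∈ L, t.IsSwap) → ∀ a b : Fin d, a ≠ b →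
    (∃ σ ∈ Subgroup.closure {x : Equiv.Perm (Fin d) | x ∈ L}, σ a = b) →
    ∃ L', BraidEquiv L L' ∧ L'.head? = some (Equiv.swap a b) := by
  intro n
  induction n with
  | zero =>
      intro L hlen _ a b hab horb
      have hnil : L = [] := List.length_eq_zero_iff.mp (Nat.le_zero.mp hlen)
      subst hnil
      obtain ⟨σ, hσ, hσa⟩ := horb
      have hS : {x : Equiv.Perm (Fin d) | x ∈ ([] : List (Equiv.Perm (Fin d)))} = ∅ := by simp
      rw [hS, Subgroup.closure_empty, Subgroup.mem_bot] at hσ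
      subst hσ
      exact absurd (by simpa using hσa) hab
  | succ n ih =>
      intro L hlen hswaps a b hab horb
      -- find a generator moving `a`
      have hmove : ∃ t ∈ L, t a ≠ a := by
        by_contra hcon
        push_neg at hcon
        have hle : Subgroup.closure {x : Equiv.Perm (Fin d) | x ∈ L}
            ≤ MulAction.stabilizer (Equiv.Perm (Fin d)) a := by
          rw [Subgroup.closure_le]
          intro t ht
          simpa [MulAction.mem_stabilizer_iff, Equiv.Perm.smul_def] using hcon t ht
        obtain ⟨σ, hσ, hσa⟩ := horb
        have hfix : σ a = a := by
          simpa [MulAction.mem_stabilizer_iff, Equiv.Perm.smul_def] using hle hσ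
        exact hab ((hσa.symm.trans hfix).symm)
      obtain ⟨t, htL, hta⟩ := hmove
      set c := t a with hc
      have hteq : t = Equiv.swap a c := by rw [hc]; exact isSwap_eq_swap (hswaps t htL) hta
      obtain ⟨l₁, l₂, rfl⟩ := List.append_of_mem htL
      set M : List (Equiv.Perm (Fin d)) := (l₁.map fun x => t⁻¹ * x * t) ++ l₂ with hM
      have hpull : BraidEquiv (l₁ ++ t :: l₂) (t :: M) := braidEquiv_pull l₁ t l₂
      have hMlen : M.length ≤ n := by
        have h1 : (l₁ ++ t :: l₂).length ≤ n + 1 := hlen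
        simp only [List.length_append, List.length_cons] at h1
        simp only [hM, List.length_append, List.length_map]
        omega
      have hMswap : ∀ u ∈ M, u.IsSwap := by
        intro u hu
        rw [hM] at hu
        rcases List.mem_append.mp hu with h1 | h2
        · obtain ⟨x, hx, rfl⟩ := List.mem_map.mp h1
          simpa using isSwap_conj (hswaps x (by simp [hx])) t⁻¹
        · exact hswaps u (by simp [h2])
      have hclos : Subgroup.closure {x : Equiv.Perm (Fin d) | x ∈ l₁ ++ t :: l₂}
          = Subgroup.closure {x : Equiv.Perm (Fin d) | x ∈ t :: M} := braidEquiv_closure hpull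
      have hins : {x : Equiv.Perm (Fin d) | x ∈ t :: M}
          = insert (Equiv.swap a c) {x : Equiv.Perm (Fin d) | x ∈ M} := by
        ext x
        simp [List.mem_cons, Set.mem_insert_iff, ← hteq]
      obtain ⟨σ, hσ, hσa⟩ := horb
      rw [hclos, hins] at hσ
      rcases orbit_insert_swap _ a c b σ hσ hσa with ⟨τ, hτ, hτa⟩ | ⟨τ, hτ, hτc⟩
      · -- b is in the M-orbit of a
        obtain ⟨L', hL', hhead⟩ := ih M hMlen hMswap a b hab ⟨τ, hτ, hτa⟩
        cases L' with
        | nil => simp at hhead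
        | cons s rest =>
          have hs : s = Equiv.swap a b := by simpa using hhead
          subst hs
          refine ⟨Equiv.swap a b :: ((Equiv.swap a b)⁻¹ * t * Equiv.swap a b) :: rest, ?_, rfl⟩
          refine braidEquiv_trans hpull (braidEquiv_trans (braidEquiv_cons t hL') ?_)
          have hstep := BraidStep.step ([] : List (Equiv.Perm (Fin d))) rest (Equiv.swap a b)
            ((Equiv.swap a b)⁻¹ * t * Equiv.swap a b)
          have he : Equiv.swap a b * ((Equiv.swap a b)⁻¹ * t * Equiv.swap a b)
              * (Equiv.swap a b)⁻¹ = t := by group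
          rw [he] at hstep
          exact braidEquiv_symm (braidEquiv_of_step hstep)
      · -- b is in the M-orbit of c
        by_cases hcb : c = b
        · subst hcb
          exact ⟨t :: M, hpull, by simp [hteq]⟩
        · obtain ⟨L', hL', hhead⟩ := ih M hMlen hMswap c b hcb ⟨τ, hτ, hτc⟩
          cases L' with
          | nil => simp at hhead
          | cons s rest =>
            have hs : s = Equiv.swap c b := by simpa using hhead
            subst hs
            refine ⟨Equiv.swap a b :: t :: rest, ?_, rfl⟩
            refine braidEquiv_trans hpull (braidEquiv_trans (braidEquiv_cons t hL') ?_)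
            have hstep := BraidStep.step ([] : List (Equiv.Perm (Fin d))) rest t (Equiv.swap c b)
            have he : t * Equiv.swap c b * t⁻¹ = Equiv.swap a b := by
              have h1 : t c = a := by rw [hteq]; exact Equiv.swap_apply_right a c
              have h2 : t b = b := by
                rw [hteq]
                exact Equiv.swap_apply_of_ne_of_ne (Ne.symm hab) (fun h => hcb h.symm)
              have h3 := Equiv.swap_apply_apply t c b
              rw [h1, h2] at h3
              exact h3.symm
            rw [he] at hstep
            exact braidEquiv_of_step hstep

/-- A sequence of transpositions `(t_1,...,t_n)` with `a ≠ b` in the same orbit of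
`⟨t_1,...,t_n⟩` is braid-equivalent to a sequence starting with `(ab)`. -/
theorem braidEquiv_head_swap {d : ℕ} (L : List (Equiv.Perm (Fin d)))
    (hL : ∀ t ∈ L, t.IsSwap)
    (a b : Fin d) (hab : a ≠ b)
    (horb : ∃ σ ∈ Subgroup.closure {x : Equiv.Perm (Fin d) | x ∈ L}, σ a = b) :
    ∃ L' : List (Equiv.Perm (Fin d)),
      BraidEquiv L L' ∧ L'.head? = some (Equiv.swap a b) :=
  braid_main L.length L le_rfl hL a b hab horb
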